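/- Let g : ℝ → ℝ be any map such that g(x) = x whenever x < −10 or x > 1, and g(x) = h(T₋₁⁻¹(h⁻¹(x))) for all x ∈ [−10, −9.8], where T₋₁⁻¹(x) = 100x + 99 and h⁻¹(y) = 10y for y ≥ 0, h⁻¹(y) = y/10 for y < 0; define g̃ : ℝ → ℝ by g̃(x) = −g(−x). Then K₋ is backward invariant under the generated semigroup: every map f belonging to the submonoid of self-maps of ℝ (under composition) generated by {T₀, T₀⁻¹, g, g̃}, where T₀⁻¹(x) = 100x, satisfies K₋ ⊆ f '' K₋. -/

import Mathlib

open scoped NNReal ENNReal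

noncomputable section

/-- The affine contraction of ratio 1/100 fixing 0. -/
def T0 (x : ℝ) : ℝ := x / 100

/-- The affine contraction of ratio 1/100 fixing 1. -/
def T1 (x : ℝ) : ℝ := 1 + (x - 1) / 100

/-- The affine contraction of ratio 1/100 fixing -1. -/
def Tm1 (x : ℝ) : ℝ := -1 + (x + 1) / 100

/-- The inverse of `T0`. -/
def T0inv (x : ℝ) : ℝ := 100 * x

/-- The `i`-th iterate of `T0` for `i ≥ 0`, and the `|i|`-th iterate of
`T0⁻¹ : x ↦ 100 x` for `i < 0`. -/
def T0z : ℤ → ℝ → ℝ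
  | Int.ofNat n => T0^[n]
  | Int.negSucc n => T0inv^[n + 1]

/-- The set `K₊ = {0} ∪ ⋃ i ∈ ℤ, T₀^[i] '' (C₁ ∪ C₋₁)` where `C₁ = T₁ '' C`,
`C₋₁ = T₋₁ '' C`. -/
def Kplus (C : Set ℝ) : Set ℝ := {0} ∪ ⋃ i : ℤ, T0z i '' (T1 '' C ∪ Tm1 '' C)

/-- The map `Q : x ↦ x/10`. -/
def Q (x : ℝ) : ℝ := x / 10

/-- The set `K₋ = Q '' K₊`. -/
def Kminus (C : Set ℝ) : Set ℝ := Q '' Kplus C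

/-- The bijection `h` : `x ↦ x/10` for `x ≥ 0`, `x ↦ 10 x` for `x < 0`. -/
def hmap (x : ℝ) : ℝ := if 0 ≤ x then x / 10 else 10 * x

/-- The inverse of `h` : `y ↦ 10 y` for `y ≥ 0`, `y ↦ y/10` for `y < 0`. -/
def hmapInv (y : ℝ) : ℝ := if 0 ≤ y then 10 * y else y / 10

/-- The inverse of `T₋₁` : `x ↦ 100 x + 99`. -/
def Tm1inv (x : ℝ) : ℝ := 100 * x + 99

/- ### Auxiliary lemmas -/

lemma T0_iter (n : ℕ) (x : ℝ) : T0^[n] x = x / 100 ^ n := by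
  induction n with
  | zero => simp
  | succ n ih => rw [Function.iterate_succ_apply', ih, T0, pow_succ]; ring

lemma T0inv_iter (n : ℕ) (x : ℝ) : T0inv^[n] x = 100 ^ n * x := by
  induction n with
  | zero => simp
  | succ n ih => rw [Function.iterate_succ_apply', ih, T0inv, pow_succ]; ring

lemma T0z_apply (i : ℤ) (x : ℝ) : T0z i x = (100 : ℝ) ^ (-i) * x := by
  cases i with
  | ofNat n =>
      show T0^[n] x = _
      rw [T0_iter]
      rw [Int.ofNat_eq_coe, zpow_neg, zpow_natCast, div_eq_inv_mul]
  | negSucc n =>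
      show T0inv^[n + 1] x = _
      rw [T0inv_iter]
      have h : -Int.negSucc n = ((n + 1 : ℕ) : ℤ) := by
        simp [Int.negSucc_eq]
      rw [h, zpow_natCast]

lemma mem_Kminus_iff {C : Set ℝ} {y : ℝ} :
    y ∈ Kminus C ↔ y = 0 ∨ ∃ i : ℤ, ∃ d ∈ T1 '' C ∪ Tm1 '' C,
      y = (100 : ℝ) ^ i * d / 10 := by
  constructor
  · rintro ⟨x, hx, rfl⟩
    simp only [Kplus, Set.mem_union, Set.mem_singleton_iff, Set.mem_iUnion] at hx
    rcases hx with rfl | ⟨i, d, hd, rfl⟩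
    · left; simp [Q]
    · right
      refine ⟨-i, d, hd, ?_⟩
      rw [T0z_apply]; rfl
  · rintro (rfl | ⟨i, d, hd, rfl⟩)
    · exact ⟨0, Or.inl rfl, by simp [Q]⟩
    · refine ⟨T0z (-i) d, Or.inr (Set.mem_iUnion.2 ⟨-i, Set.mem_image_of_mem _ hd⟩), ?_⟩
      rw [T0z_apply, neg_neg]; rfl

lemma C_bounds {C : Set ℝ} (hne : C.Nonempty) (hcomp : IsCompact C)
    (hself : C = Tm1 '' C ∪ T0 '' C ∪ T1 '' C) :
    ∀ c ∈ C, -1 ≤ c ∧ c ≤ 1 := by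
  obtain ⟨M, hMC, hMmax⟩ := hcomp.exists_isMaxOn hne continuous_id.continuousOn
  obtain ⟨m, hmC, hmmin⟩ := hcomp.exists_isMinOn hne continuous_id.continuousOn
  have hM : M ≤ 1 := by
    have hM2 := hMC
    rw [hself] at hM2
    rcases hM2 with (⟨c, hc, hceq⟩ | ⟨c, hc, hceq⟩) | ⟨c, hc, hceq⟩ <;>
    · have hle : c ≤ M := hMmax hc
      simp only [Tm1, T0, T1] at hceq
      linarith
  have hm : -1 ≤ m := by
    have hm2 := hmC
    rw [hself] at hm2
    rcases hm2 with (⟨c, hc, hceq⟩ | ⟨c, hc, hceq⟩) | ⟨c, hc, hceq⟩ <;>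
    · have hle : m ≤ c := hmmin hc
      simp only [Tm1, T0, T1] at hceq
      linarith
  intro c hc
  exact ⟨le_trans hm (hmmin hc), le_trans (hMmax hc) hM⟩

lemma T0pow_mem {C : Set ℝ} (hsub : T0 '' C ⊆ C) :
    ∀ n : ℕ, ∀ c ∈ C, c / 100 ^ n ∈ C := by
  intro n
  induction n with
  | zero => intro c hc; simpa using hc
  | succ n ih =>
      intro c hc
      have h : c / 100 ^ (n + 1) = T0 (c / 100 ^ n) := by
        rw [T0, pow_succ]; ring
      rw [h]
      exact hsub (Set.mem_image_of_mem _ (ih c hc))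

lemma Czpow_mem {C : Set ℝ} (hsub : T0 '' C ⊆ C) :
    ∀ i : ℤ, i ≤ 0 → ∀ c ∈ C, (100 : ℝ) ^ i * c ∈ C := by
  intro i hi c hc
  obtain ⟨n, rfl⟩ := Int.exists_eq_neg_ofNat hi
  have h : (100 : ℝ) ^ (-(n : ℤ)) * c = c / 100 ^ n := by
    rw [zpow_neg, zpow_natCast]; ring
  rw [h]
  exact T0pow_mem hsub n c hc

lemma zero_mem_C {C : Set ℝ} (hne : C.Nonempty) (hcomp : IsCompact C)
    (hsub : T0 '' C ⊆ C) : (0 : ℝ) ∈ C := by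
  obtain ⟨c, hc⟩ := hne
  have hmem : ∀ n : ℕ, c / 100 ^ n ∈ C := fun n => T0pow_mem hsub n c hc
  have htend : Filter.Tendsto (fun n : ℕ => c / 100 ^ n) Filter.atTop (nhds 0) := by
    have heq : (fun n : ℕ => c / 100 ^ n) = fun n : ℕ => c * (1 / 100 : ℝ) ^ n := by
      funext n; rw [one_div, inv_pow]; ring
    rw [heq]
    simpa using
      (tendsto_pow_atTop_nhds_zero_of_lt_one (by norm_num : (0:ℝ) ≤ 1/100)
        (by norm_num : (1/100 : ℝ) < 1)).const_mul c
  exact hcomp.isClosed.mem_of_tendsto htend (Filter.Eventually.of_forall hmem)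

lemma lipschitz_aux (f : ℝ → ℝ) (h : ∀ x y, f x - f y = (x - y) / 100) :
    LipschitzWith (100⁻¹ : ℝ≥0) f := by
  apply LipschitzWith.of_dist_le_mul
  intro x y
  rw [Real.dist_eq, Real.dist_eq, h x y, abs_div]
  rw [abs_of_nonneg (by norm_num : (0:ℝ) ≤ 100)]
  rw [NNReal.coe_inv]
  norm_num
  linarith

lemma attractor_eq (C D : Set ℝ) (hCne : C.Nonempty) (hCc : IsCompact C)
    (hC : C = Tm1 '' C ∪ T0 '' C ∪ T1 '' C)
    (hDne : D.Nonempty) (hDc : IsCompact D)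
    (hD : D = Tm1 '' D ∪ T0 '' D ∪ T1 '' D) : C = D := by
  have hfin : EMetric.hausdorffEdist C D ≠ ⊤ :=
    Metric.hausdorffEdist_ne_top_of_nonempty_of_bounded hCne hDne
      hCc.isBounded hDc.isBounded
  have hlipTm1 : LipschitzWith (100⁻¹ : ℝ≥0) Tm1 :=
    lipschitz_aux Tm1 (by intro x y; simp only [Tm1]; ring)
  have hlipT0 : LipschitzWith (100⁻¹ : ℝ≥0) T0 :=
    lipschitz_aux T0 (by intro x y; simp only [T0]; ring)
  have hlipT1 : LipschitzWith (100⁻¹ : ℝ≥0) T1 :=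
    lipschitz_aux T1 (by intro x y; simp only [T1]; ring)
  have key : ∀ S T : Set ℝ, IsCompact T → T.Nonempty →
      T = Tm1 '' T ∪ T0 '' T ∪ T1 '' T →
      S = Tm1 '' S ∪ T0 '' S ∪ T1 '' S →
      ∀ x ∈ S, ∃ y ∈ T,
        edist x y ≤ (100⁻¹ : ℝ≥0) * EMetric.hausdorffEdist S T := by
    intro S T hTc hTne hT hS x hx
    have step : ∀ f : ℝ → ℝ, LipschitzWith (100⁻¹ : ℝ≥0) f → f '' T ⊆ T →
        ∀ c ∈ S, ∃ y ∈ T,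
          edist (f c) y ≤ (100⁻¹ : ℝ≥0) * EMetric.hausdorffEdist S T := by
      intro f hf hfT c hc
      obtain ⟨d, hd, hcd⟩ := hTc.exists_infEdist_eq_edist hTne c
      refine ⟨f d, hfT (Set.mem_image_of_mem f hd), ?_⟩
      calc edist (f c) (f d) ≤ (100⁻¹ : ℝ≥0) * edist c d := hf c d
        _ ≤ (100⁻¹ : ℝ≥0) * EMetric.hausdorffEdist S T := by
            apply mul_le_mul_right
            rw [← hcd]
            exact EMetric.infEdist_le_hausdorffEdist_of_mem hc
    have hTm1T : Tm1 '' T ⊆ T := by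
      intro z hz; rw [hT]; exact Or.inl (Or.inl hz)
    have hT0T : T0 '' T ⊆ T := by
      intro z hz; rw [hT]; exact Or.inl (Or.inr hz)
    have hT1T : T1 '' T ⊆ T := by
      intro z hz; rw [hT]; exact Or.inr hz
    rw [hS] at hx
    rcases hx with (⟨c, hc, rfl⟩ | ⟨c, hc, rfl⟩) | ⟨c, hc, rfl⟩
    · exact step Tm1 hlipTm1 hTm1T c hc
    · exact step T0 hlipT0 hT0T c hc
    · exact step T1 hlipT1 hT1T c hc
  have hle : EMetric.hausdorffEdist C D ≤
      (100⁻¹ : ℝ≥0) * EMetric.hausdorffEdist C D := by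
    apply EMetric.hausdorffEdist_le_of_mem_edist
    · intro x hx
      exact key C D hDc hDne hD hC x hx
    · intro x hx
      obtain ⟨y, hy, hxy⟩ := key D C hCc hCne hC hD x hx
      refine ⟨y, hy, ?_⟩
      unfold EMetric.hausdorffEdist at hxy ⊢
      rwa [Metric.hausdorffEDist_comm] at hxy
  have hzero : EMetric.hausdorffEdist C D = 0 := by
    have hfin2 : ((100⁻¹ : ℝ≥0) : ℝ≥0∞) * EMetric.hausdorffEdist C D ≠ ⊤ :=
      ENNReal.mul_ne_top (by simp) hfin
    have hr := (ENNReal.toReal_le_toReal hfin hfin2).2 hle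
    rw [ENNReal.toReal_mul] at hr
    have hco : ((100⁻¹ : ℝ≥0) : ℝ≥0∞).toReal = (100⁻¹ : ℝ) := by
      simp
    rw [hco] at hr
    have hnn := ENNReal.toReal_nonneg (a := EMetric.hausdorffEdist C D)
    have : (EMetric.hausdorffEdist C D).toReal = 0 := by linarith
    rcases ENNReal.toReal_eq_zero_iff _ |>.1 this with h | h
    · exact h
    · exact absurd h hfin
  exact EMetric.hausdorffEdist_zero_iff_eq_of_closed hCc.isClosed hDc.isClosed |>.1 hzero

lemma negC_eq {C : Set ℝ} (hne : C.Nonempty) (hcomp : IsCompact C)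
    (hself : C = Tm1 '' C ∪ T0 '' C ∪ T1 '' C) :
    ∀ c ∈ C, -c ∈ C := by
  have hDself : Neg.neg '' C =
      Tm1 '' (Neg.neg '' C) ∪ T0 '' (Neg.neg '' C) ∪ T1 '' (Neg.neg '' C) := by
    conv_lhs => rw [hself]
    rw [Set.image_union, Set.image_union, Set.image_image, Set.image_image,
      Set.image_image, Set.image_image, Set.image_image, Set.image_image]
    have e1 : (fun c => -Tm1 c) '' C = (fun c => T1 (-c)) '' C := by
      apply Set.image_congr; intro x _; simp only [Tm1, T1]; ring
    have e2 : (fun c => -T0 c) '' C = (fun c => T0 (-c)) '' C := by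
      apply Set.image_congr; intro x _; simp only [T0]; ring
    have e3 : (fun c => -T1 c) '' C = (fun c => Tm1 (-c)) '' C := by
      apply Set.image_congr; intro x _; simp only [Tm1, T1]; ring
    rw [e1, e2, e3]
    ext x
    simp only [Set.mem_union]
    tauto
  have heq : Neg.neg '' C = C :=
    attractor_eq (Neg.neg '' C) C (hne.image _) (hcomp.image continuous_neg) hDself
      hne hcomp hself
  intro c hc
  rw [← heq]
  exact Set.mem_image_of_mem _ hc

lemma d_bounds {C : Set ℝ} (hb : ∀ c ∈ C, -1 ≤ c ∧ c ≤ 1) :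
    ∀ d ∈ T1 '' C ∪ Tm1 '' C,
      (0.98 ≤ d ∧ d ≤ 1) ∨ (-1 ≤ d ∧ d ≤ -0.98) := by
  rintro d (⟨c, hc, rfl⟩ | ⟨c, hc, rfl⟩)
  · left
    obtain ⟨h1, h2⟩ := hb c hc
    simp only [T1]
    constructor <;> [linarith; linarith]
  · right
    obtain ⟨h1, h2⟩ := hb c hc
    simp only [Tm1]
    constructor <;> [linarith; linarith]

lemma exists_hmap {C : Set ℝ} (hb : ∀ c ∈ C, -1 ≤ c ∧ c ≤ 1)
    (hsub0 : T0 '' C ⊆ C) (hsubU : T1 '' C ∪ Tm1 '' C ⊆ C) (h0 : (0 : ℝ) ∈ C) :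
    ∀ y ∈ Kminus C, -10 ≤ y → y ≤ 1 → ∃ c ∈ C, hmap c = y := by
  intro y hy hy1 hy2
  rw [mem_Kminus_iff] at hy
  rcases hy with rfl | ⟨i, d, hd, rfl⟩
  · exact ⟨0, h0, by simp [hmap]⟩
  have hdC : d ∈ C := hsubU hd
  have hp : (0 : ℝ) < (100 : ℝ) ^ i := zpow_pos (by norm_num) i
  rcases d_bounds hb d hd with ⟨hd1, hd2⟩ | ⟨hd1, hd2⟩
  · -- positive case
    have hile : i ≤ 0 := by
      by_contra hcon
      push_neg at hcon
      have h100 : (100 : ℝ) ^ (1 : ℤ) ≤ 100 ^ i :=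
        zpow_le_zpow_right₀ (by norm_num) hcon
      rw [zpow_one] at h100
      nlinarith
    refine ⟨(100 : ℝ) ^ i * d, Czpow_mem hsub0 i hile d hdC, ?_⟩
    rw [hmap, if_pos (le_of_lt (mul_pos hp (by linarith)))]
  · -- negative case
    have hile : i - 1 ≤ 0 := by
      by_contra hcon
      push_neg at hcon
      have h2i : (2 : ℤ) ≤ i := by omega
      have h100 : (100 : ℝ) ^ (2 : ℤ) ≤ 100 ^ i :=
        zpow_le_zpow_right₀ (by norm_num) h2i
      have h2 : (100 : ℝ) ^ (2 : ℤ) = 10000 := by norm_num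
      rw [h2] at h100
      nlinarith
    refine ⟨(100 : ℝ) ^ (i - 1) * d, Czpow_mem hsub0 (i - 1) hile d hdC, ?_⟩
    have hneg : ¬(0 ≤ (100 : ℝ) ^ (i - 1) * d) := by
      push_neg
      exact mul_neg_of_pos_of_neg (zpow_pos (by norm_num) _) (by linarith)
    rw [hmap, if_neg hneg]
    have hsplit : (100 : ℝ) ^ i = 100 ^ (i - 1) * 100 := by
      rw [← zpow_add_one₀ (by norm_num : (100 : ℝ) ≠ 0), sub_add_cancel]
    rw [hsplit]
    ring

lemma TmC_mem_Kminus {C : Set ℝ} {c : ℝ} (hc : c ∈ C) : 10 * Tm1 c ∈ Kminus C := by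
  rw [mem_Kminus_iff]
  right
  exact ⟨1, Tm1 c, Or.inr (Set.mem_image_of_mem _ hc), by rw [zpow_one]; ring⟩

lemma neg_mem_Kminus {C : Set ℝ} (hnegC : ∀ c ∈ C, -c ∈ C) {y : ℝ}
    (hy : y ∈ Kminus C) : -y ∈ Kminus C := by
  rw [mem_Kminus_iff] at hy ⊢
  rcases hy with rfl | ⟨i, d, hd, rfl⟩
  · left; simp
  right
  refine ⟨i, -d, ?_, by ring⟩
  rcases hd with ⟨c, hc, rfl⟩ | ⟨c, hc, rfl⟩
  · right
    exact ⟨-c, hnegC c hc, by simp only [Tm1, T1]; ring⟩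
  · left
    exact ⟨-c, hnegC c hc, by simp only [Tm1, T1]; ring⟩

theorem stmt_15 (C : Set ℝ) (hne : C.Nonempty) (hcomp : IsCompact C)
    (hself : C = Tm1 '' C ∪ T0 '' C ∪ T1 '' C)
    (g : ℝ → ℝ)
    (hg_id : ∀ x : ℝ, x < -10 ∨ 1 < x → g x = x)
    (hg_left : ∀ x ∈ Set.Icc (-10 : ℝ) (-9.8 : ℝ), g x = hmap (Tm1inv (hmapInv x))) :
    ∀ f ∈ Submonoid.closure ({T0, T0inv, g, fun x => -g (-x)} : Set (Function.End ℝ)),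
      Kminus C ⊆ f '' Kminus C := by
  have hsub0 : T0 '' C ⊆ C := by
    intro x hx; rw [hself]; exact Or.inl (Or.inr hx)
  have hsubU : T1 '' C ∪ Tm1 '' C ⊆ C := by
    rintro x (hx | hx)
    · rw [hself]; exact Or.inr hx
    · rw [hself]; exact Or.inl (Or.inl hx)
  have hb := C_bounds hne hcomp hself
  have h0 := zero_mem_C hne hcomp hsub0
  have hnegC := negC_eq hne hcomp hself
  -- the generator T0
  have hKT0 : Kminus C ⊆ T0 '' Kminus C := by
    intro y hy
    refine ⟨100 * y, ?_, by simp only [T0]; ring⟩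
    rw [mem_Kminus_iff] at hy ⊢
    rcases hy with rfl | ⟨i, d, hd, rfl⟩
    · left; ring
    · right
      exact ⟨i + 1, d, hd, by
        rw [zpow_add_one₀ (by norm_num : (100 : ℝ) ≠ 0)]; ring⟩
  -- the generator T0inv
  have hKT0inv : Kminus C ⊆ T0inv '' Kminus C := by
    intro y hy
    refine ⟨y / 100, ?_, by simp only [T0inv]; ring⟩
    rw [mem_Kminus_iff] at hy ⊢
    rcases hy with rfl | ⟨i, d, hd, rfl⟩
    · left; ring
    · right
      exact ⟨i - 1, d, hd, by
        rw [zpow_sub_one₀ (by norm_num : (100 : ℝ) ≠ 0)]; ring⟩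
  -- the generator g
  have hKg : Kminus C ⊆ g '' Kminus C := by
    intro y hy
    by_cases hcase : y < -10 ∨ 1 < y
    · exact ⟨y, hy, hg_id y hcase⟩
    · push_neg at hcase
      obtain ⟨hc1, hc2⟩ := hcase
      obtain ⟨c, hcC, hcy⟩ := exists_hmap hb hsub0 hsubU h0 y hy (by linarith) (by linarith)
      refine ⟨10 * Tm1 c, TmC_mem_Kminus hcC, ?_⟩
      obtain ⟨hb1, hb2⟩ := hb c hcC
      have hx1 : (-10 : ℝ) ≤ 10 * Tm1 c := by simp only [Tm1]; linarith
      have hx2 : 10 * Tm1 c ≤ (-9.8 : ℝ) := by simp only [Tm1]; norm_num; linarith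
      rw [hg_left _ ⟨hx1, hx2⟩]
      have hneg : ¬(0 ≤ 10 * Tm1 c) := by push_neg; simp only [Tm1]; linarith
      rw [hmapInv, if_neg hneg]
      have harg : Tm1inv (10 * Tm1 c / 10) = c := by
        simp only [Tm1inv, Tm1]; ring
      rw [harg, hcy]
  -- the generator g̃
  have hKgt : Kminus C ⊆ (fun x => -g (-x)) '' Kminus C := by
    intro y hy
    obtain ⟨x, hx, hgx⟩ := hKg (neg_mem_Kminus hnegC hy)
    refine ⟨-x, neg_mem_Kminus hnegC hx, ?_⟩
    simp only [neg_neg]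
    rw [hgx, neg_neg]
  intro f hf
  induction hf using Submonoid.closure_induction with
  | mem x hx =>
      have hx' : x = T0 ∨ x = T0inv ∨ x = g ∨ x = fun x => -g (-x) := by
        exact hx
      rcases hx' with rfl | rfl | rfl | rfl
      exacts [hKT0, hKT0inv, hKg, hKgt]
  | one =>
      intro y hy
      exact ⟨y, hy, rfl⟩
  | mul x y hx hy ihx ihy =>
      intro z hz
      obtain ⟨u, hu, hu2⟩ := ihx hz
      obtain ⟨v, hv, hv2⟩ := ihy hu
      exact ⟨v, hv, by show x (y v) = z; rw [hv2, hu2]⟩
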